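/- Let I and J be nonempty finite intervals of integers with |I| < μ, and set A = I + J·μ = {i + jμ : i ∈ I, j ∈ J}. Then for every integer τ there is a bijection a ↦ a* from A to A + τ such that {a* − a : a ∈ A} = ([1, 2|I|]_o + [1, 2|J|]_o·μ) + τ − |I| − |J|μ, where [a,b]_o denotes the odd integers in [a,b]. -/

import Mathlib

/-- The odd integers in the interval `[1, 2s]`, i.e. `{1, 3, …, 2s−1}`. -/
noncomputable def oddsUpTo (s : ℕ) : Finset ℤ :=
  (Finset.Icc (1 : ℤ) (2 * s)).filter (fun x => x % 2 = 1)

/-- Lemma: let `I` and `J` be nonempty intervals of integers with `|I| < μ`, and set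
`A = I + J·μ`. For every integer `τ` there is a bijection `a ↦ a*` from `A` to
`A + τ` such that `{a* − a : a ∈ A} = ([1,2|I|]_o + [1,2|J|]_o·μ) + τ − |I| − |J|μ`. -/
theorem stmt5 (I J : Finset ℤ) (μ τ : ℤ)
    (hI : ∃ a b : ℤ, a ≤ b ∧ I = Finset.Icc a b)
    (hJ : ∃ c e : ℤ, c ≤ e ∧ J = Finset.Icc c e)
    (hμ : (I.card : ℤ) < μ) :
    ∃ f : ℤ → ℤ,
      Set.BijOn f ↑(Finset.image₂ (fun i j => i + j * μ) I J)
        ↑((Finset.image₂ (fun i j => i + j * μ) I J).image (· + τ)) ∧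
      (Finset.image₂ (fun i j => i + j * μ) I J).image (fun a => f a - a)
        = Finset.image₂
            (fun x y => x + y * μ + (τ - (I.card : ℤ) - (J.card : ℤ) * μ))
            (oddsUpTo I.card) (oddsUpTo J.card) := by
  obtain ⟨a, b, hab, rfl⟩ := hI
  obtain ⟨c, e, hce, rfl⟩ := hJ
  have hs : ((Finset.Icc a b).card : ℤ) = b + 1 - a := by
    rw [Int.card_Icc, Int.toNat_of_nonneg (by omega)]
  have ht : ((Finset.Icc c e).card : ℤ) = e + 1 - c := by
    rw [Int.card_Icc, Int.toNat_of_nonneg (by omega)]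
  refine ⟨fun z => (a + b) + (c + e) * μ + τ - z, ⟨?_, ?_, ?_⟩, ?_⟩
  · -- MapsTo
    intro z hz
    simp only [Finset.coe_image₂, Set.mem_image2, Finset.mem_coe,
      Finset.mem_Icc, Finset.coe_image, Set.mem_image] at hz ⊢
    obtain ⟨i, hi, j, hj, rfl⟩ := hz
    exact ⟨(a + b - i) + (c + e - j) * μ, ⟨a + b - i, by omega, c + e - j, by omega, rfl⟩,
      by ring⟩
  · -- InjOn
    intro x _ y _ h
    simp only at h
    linarith
  · -- SurjOn
    intro w hw
    simp only [Finset.coe_image, Set.mem_image, Finset.mem_coe, Finset.mem_image₂,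
      Finset.mem_Icc, Finset.coe_image₂, Set.mem_image2] at hw ⊢
    obtain ⟨z, ⟨i, hi, j, hj, rfl⟩, rfl⟩ := hw
    exact ⟨(a + b - i) + (c + e - j) * μ, ⟨a + b - i, by omega, c + e - j, by omega, rfl⟩,
      by ring⟩
  · -- image equality
    ext d
    simp only [Finset.mem_image, Finset.mem_image₂, Finset.mem_Icc, oddsUpTo,
      Finset.mem_filter]
    constructor
    · rintro ⟨z, ⟨i, hi, j, hj, rfl⟩, rfl⟩
      refine ⟨a + b - 2 * i + (b + 1 - a), ⟨⟨by omega, ?_⟩, by omega⟩,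
        c + e - 2 * j + (e + 1 - c), ⟨⟨by omega, ?_⟩, by omega⟩, ?_⟩
      · rw [hs]; omega
      · rw [ht]; omega
      · rw [hs, ht]; ring
    · rintro ⟨x, ⟨⟨hx1, hx2⟩, hx3⟩, y, ⟨⟨hy1, hy2⟩, hy3⟩, rfl⟩
      rw [hs] at hx2
      rw [ht] at hy2
      obtain ⟨u, rfl⟩ : ∃ u, x = 2 * u + 1 := ⟨(x - 1) / 2, by omega⟩
      obtain ⟨v, rfl⟩ : ∃ v, y = 2 * v + 1 := ⟨(y - 1) / 2, by omega⟩
      refine ⟨(b - u) + (e - v) * μ, ⟨b - u, by omega, e - v, by omega, rfl⟩, ?_⟩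
      rw [hs, ht]; ring
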